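/- Suppose that in Algorithm niAPG every proximal step is exact (x_{k+1} is a global minimizer of w ↦ (1/2)·‖w − z_k‖² + η·g(w) for all k ≥ 1) and that F is bounded below. Let c₁ = max_{t = 1,…,q+1} F(x_t) − inf F. Then: (i) lim_{k→∞} min_{t ∈ W(k)} ‖x_{t+1} − v_t‖² = 0; and (ii) for every K ≥ 1, min_{k = 1,…,K} min_{t ∈ W(k)} ‖x_{t+1} − v_t‖² ≤ 2·(q+1)·c₁ / ((ρ − L)·K). -/

import Mathlib

open Filter
open scoped RealInnerProductSpace

lemma descent_lemma {E : Type*} [NormedAddCommGroup E] [InnerProductSpace ℝ E] [CompleteSpace E]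
    (f : E → ℝ) (f' : E → E) (L : ℝ)
    (hf : ∀ x, HasGradientAt f (f' x) x)
    (hlip : ∀ x y, ‖f' x - f' y‖ ≤ L * ‖x - y‖) (a b : E) :
    f b ≤ f a + ⟪f' a, b - a⟫ + L / 2 * ‖b - a‖ ^ 2 := by
  set φ : ℝ → ℝ := fun t => f (a + t • (b - a)) - t * ⟪f' a, b - a⟫
    - t ^ 2 * (L / 2) * ‖b - a‖ ^ 2 with hφ
  have hline : ∀ t : ℝ, HasDerivAt (fun s : ℝ => a + s • (b - a)) (b - a) t := by
    intro t
    simpa using ((hasDerivAt_id t).smul_const (b - a)).const_add a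
  have hder : ∀ t : ℝ, HasDerivAt φ
      (⟪f' (a + t • (b - a)), b - a⟫ - ⟪f' a, b - a⟫ - t * L * ‖b - a‖ ^ 2) t := by
    intro t
    have h1 : HasDerivAt (fun s : ℝ => f (a + s • (b - a)))
        (⟪f' (a + t • (b - a)), b - a⟫) t := by
      have := ((hf (a + t • (b - a))).hasFDerivAt).comp_hasDerivAt t (hline t)
      simp at this
      exact this
    have h2 : HasDerivAt (fun s : ℝ => s * ⟪f' a, b - a⟫) (⟪f' a, b - a⟫) t := by
      simpa using (hasDerivAt_id t).mul_const (⟪f' a, b - a⟫)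
    have h3 : HasDerivAt (fun s : ℝ => s ^ 2 * (L / 2) * ‖b - a‖ ^ 2)
        (t * L * ‖b - a‖ ^ 2) t := by
      have := ((hasDerivAt_pow 2 t).mul_const (L / 2)).mul_const (‖b - a‖ ^ 2)
      exact this.congr_deriv (by push_cast; ring)
    exact (h1.sub h2).sub h3
  have hmono : AntitoneOn φ (Set.Icc (0 : ℝ) 1) := by
    apply antitoneOn_of_deriv_nonpos (convex_Icc 0 1)
    · exact Continuous.continuousOn
        (Differentiable.continuous (fun t => (hder t).differentiableAt))
    · intro t _
      exact (hder t).differentiableAt.differentiableWithinAt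
    · intro t ht
      rw [interior_Icc] at ht
      rw [(hder t).deriv]
      have hb : ⟪f' (a + t • (b - a)) - f' a, b - a⟫ ≤ L * t * ‖b - a‖ ^ 2 := by
        calc ⟪f' (a + t • (b - a)) - f' a, b - a⟫
            ≤ ‖f' (a + t • (b - a)) - f' a‖ * ‖b - a‖ := real_inner_le_norm _ _
          _ ≤ (L * ‖(a + t • (b - a)) - a‖) * ‖b - a‖ := by
              apply mul_le_mul_of_nonneg_right (hlip _ _) (norm_nonneg _)
          _ = L * t * ‖b - a‖ ^ 2 := by
              rw [add_sub_cancel_left, norm_smul]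
              simp [abs_of_pos ht.1]
              ring
      rw [inner_sub_left] at hb
      nlinarith [hb]
  have h01 : φ 1 ≤ φ 0 := hmono (by norm_num) (by norm_num) (by norm_num)
  simp only [hφ, one_smul, zero_smul, add_zero, one_pow, one_mul, zero_mul, zero_pow,
    sub_zero, mul_zero] at h01
  have : a + (b - a) = b := by abel
  rw [this] at h01
  linarith

/-- Proposition 4: `O(1/K)` convergence rate for exact niAPG.
With exact proximal steps and `F` bounded below, letting
`c₁ = max_{t = 1,…,q+1} F(x_t) − inf F` and `m j = min_{t ∈ W(j+1)} ‖x_{t+1} − v_t‖²`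
(where `W(k) = {max(1, k−q), …, k}`), we have `m j → 0` and, for every `K ≥ 1`,
`min_{k = 1,…,K} (min_{t ∈ W(k)} ‖x_{t+1} − v_t‖²) ≤ 2(q+1)c₁ / ((ρ−L) K)`. -/
theorem niAPG_exact_rate
    {E : Type*} [NormedAddCommGroup E] [InnerProductSpace ℝ E] [FiniteDimensional ℝ E]
    (f g F : E → ℝ) (f' : E → E) (L η ρ : ℝ)
    (hL : 0 < L)
    (hf : ∀ x, HasGradientAt f (f' x) x)
    (hlip : ∀ x y, ‖f' x - f' y‖ ≤ L * ‖x - y‖)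
    (hg : LowerSemicontinuous g)
    (hF : ∀ x, F x = f x + g x)
    (hbdd : BddBelow (Set.range F))
    (hη : 0 < η) (hηL : η < 1 / L) (hρ : ρ = 1 / η)
    (q : ℕ) (x y v z : ℕ → E) (Δ : ℕ → ℝ)
    (hx01 : x 0 = x 1)
    (hy : ∀ k, 1 ≤ k → y k = x k + ((((k : ℝ) - 1) / ((k : ℝ) + 2)) • (x k - x (k - 1))))
    (hΔ : ∀ k, ∀ hk : 1 ≤ k, Δ k =
      (Finset.Icc (max 1 (k - q)) k).sup' (Finset.nonempty_Icc.mpr (by omega))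
        (fun t => F (x t)))
    (hv : ∀ k, 1 ≤ k → v k = if F (y k) ≤ Δ k then y k else x k)
    (hz : ∀ k, 1 ≤ k → z k = v k - η • f' (v k))
    (hprox : ∀ k, 1 ≤ k → ∀ w : E,
      (1 / 2) * ‖x (k + 1) - z k‖ ^ 2 + η * g (x (k + 1)) ≤
        (1 / 2) * ‖w - z k‖ ^ 2 + η * g w)
    (c₁ : ℝ)
    (hc₁ : c₁ = (Finset.Icc 1 (q + 1)).sup' (Finset.nonempty_Icc.mpr (by omega))
      (fun t => F (x t)) - sInf (Set.range F))
    -- `m j` is `min_{t ∈ W(j+1)} ‖x_{t+1} − v_t‖²`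
    (m : ℕ → ℝ)
    (hm : ∀ j : ℕ, m j = (Finset.Icc (max 1 (j + 1 - q)) (j + 1)).inf'
      (Finset.nonempty_Icc.mpr (by omega)) (fun t => ‖x (t + 1) - v t‖ ^ 2)) :
    Tendsto m atTop (nhds 0) ∧
    ∀ K : ℕ, ∀ hK : 1 ≤ K,
      (Finset.range K).inf' (Finset.nonempty_range_iff.mpr (by omega)) m ≤
        2 * ((q : ℝ) + 1) * c₁ / ((ρ - L) * (K : ℝ)) := by
  -- basic constants
  set c : ℝ := (ρ - L) / 2 with hcdef
  have hρL : L < ρ := by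
    rw [hρ]
    have := one_div_lt_one_div_of_lt hη hηL
    rwa [one_div_one_div] at this
  have hc : 0 < c := by simp only [hcdef]; linarith
  -- the key per-step decrease
  have hKEY : ∀ k, 1 ≤ k → F (x (k + 1)) ≤ Δ k - c * ‖x (k + 1) - v k‖ ^ 2 := by
    intro k hk
    set u : E := x (k + 1) - v k with hu
    set p : E := f' (v k) with hp
    -- prox inequality with w = v k
    have h1 := hprox k hk (v k)
    have hzk := hz k hk
    have e1 : x (k + 1) - z k = u + η • p := by
      rw [hzk, hu, hp]; abel
    have e2 : v k - z k = η • p := by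
      rw [hzk]; abel
    have e3 : ‖η • p‖ ^ 2 = η ^ 2 * ‖p‖ ^ 2 := by
      rw [norm_smul, mul_pow, Real.norm_eq_abs, sq_abs]
    have e4 : ‖u + η • p‖ ^ 2 = ‖u‖ ^ 2 + 2 * (η * ⟪u, p⟫) + η ^ 2 * ‖p‖ ^ 2 := by
      rw [norm_add_sq_real, real_inner_smul_right, e3]
    rw [e1, e2, e4, e3] at h1
    -- descent lemma at v k, x (k+1)
    have h2 : f (x (k + 1)) ≤ f (v k) + ⟪p, u⟫ + L / 2 * ‖u‖ ^ 2 := by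
      have := descent_lemma f f' L hf hlip (v k) (x (k + 1))
      simpa [hu, hp] using this
    -- F (v k) ≤ Δ k
    have h3 : F (v k) ≤ Δ k := by
      rw [hv k hk]
      by_cases hcase : F (y k) ≤ Δ k
      · rwa [if_pos hcase]
      · rw [if_neg hcase, hΔ k hk]
        exact Finset.le_sup' (fun t => F (x t)) (Finset.mem_Icc.mpr ⟨by omega, le_refl k⟩)
    have hip : ⟪p, u⟫ = ⟪u, p⟫ := real_inner_comm _ _
    have hηρ : η * ρ = 1 := by rw [hρ]; field_simp
    -- from h1 : (1/2) * ‖u‖^2 + η * ⟪u,p⟫ + η * g (x (k+1)) ≤ η * g (v k)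
    have h4 : ⟪u, p⟫ + g (x (k + 1)) ≤ g (v k) - ρ / 2 * ‖u‖ ^ 2 := by
      have e5 : η * (ρ / 2 * ‖u‖ ^ 2) = 1 / 2 * ‖u‖ ^ 2 := by
        calc η * (ρ / 2 * ‖u‖ ^ 2) = η * ρ * ‖u‖ ^ 2 / 2 := by ring
        _ = 1 / 2 * ‖u‖ ^ 2 := by rw [hηρ]; ring
      have hmul : η * (⟪u, p⟫ + g (x (k + 1))) ≤ η * (g (v k) - ρ / 2 * ‖u‖ ^ 2) := by
        rw [mul_add, mul_sub, e5]
        linarith [h1]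
      exact le_of_mul_le_mul_left hmul hη
    have hFx : F (x (k + 1)) = f (x (k + 1)) + g (x (k + 1)) := hF _
    have hFv : F (v k) = f (v k) + g (v k) := hF _
    rw [hip] at h2
    simp only [hcdef]
    have e6 : (ρ - L) / 2 * ‖u‖ ^ 2 = ρ / 2 * ‖u‖ ^ 2 - L / 2 * ‖u‖ ^ 2 := by ring
    linarith [h2, h4, h3, hFx, hFv, e6]
  -- Δ is monotone nonincreasing (for k ≥ 1)
  have hΔmono : ∀ k, 1 ≤ k → Δ (k + 1) ≤ Δ k := by
    intro k hk
    rw [hΔ (k + 1) (by omega)]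
    apply Finset.sup'_le
    intro t ht
    rw [Finset.mem_Icc] at ht
    rcases Nat.lt_or_ge t (k + 1) with hlt | hge
    · rw [hΔ k hk]
      exact Finset.le_sup' (fun t => F (x t)) (Finset.mem_Icc.mpr ⟨by omega, by omega⟩)
    · have ht' : t = k + 1 := by omega
      subst ht'
      have := hKEY k hk
      nlinarith [mul_nonneg hc.le (sq_nonneg ‖x (k + 1) - v k‖)]
  have hΔle : ∀ a b : ℕ, 1 ≤ a → a ≤ b → Δ b ≤ Δ a := by
    intro a b ha hab
    induction b, hab using Nat.le_induction with
    | base => exact le_refl _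
    | succ n hn ih => exact le_trans (hΔmono n (by omega)) ih
  have hΔlb : ∀ k, 1 ≤ k → sInf (Set.range F) ≤ Δ k := by
    intro k hk
    refine le_trans (csInf_le hbdd ⟨x k, rfl⟩) ?_
    rw [hΔ k hk]
    exact Finset.le_sup' (fun t => F (x t)) (Finset.mem_Icc.mpr ⟨by omega, le_refl k⟩)
  have hFx1c₁ : F (x 1) - sInf (Set.range F) ≤ c₁ := by
    rw [hc₁]
    have : F (x 1) ≤ (Finset.Icc 1 (q + 1)).sup' (Finset.nonempty_Icc.mpr (by omega))
        (fun t => F (x t)) :=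
      Finset.le_sup' (fun t => F (x t)) (Finset.mem_Icc.mpr ⟨le_refl 1, by omega⟩)
    linarith
  -- core rate estimate
  have key2 : ∀ K : ℕ, 1 ≤ K → ∀ μ : ℝ, 0 ≤ μ →
      (∀ t ∈ Finset.Icc 1 K, μ ≤ ‖x (t + 1) - v t‖ ^ 2) →
      c * μ * (K : ℝ) ≤ ((q : ℝ) + 1) * c₁ := by
    intro K hK μ hμ0 hμle
    set α : ℝ := c * μ / ((q : ℝ) + 1) with hα
    have hq1 : (0 : ℝ) < (q : ℝ) + 1 := by positivity
    have hα0 : 0 ≤ α := by positivity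
    have hαq : α * ((q : ℝ) + 1) = c * μ := by
      rw [hα]; exact div_mul_cancel₀ _ (by positivity)
    set Q : ℕ → ℝ := fun n => (Finset.Icc (max 1 (n + 1 - q)) (n + 1)).sup'
      (Finset.nonempty_Icc.mpr (by omega)) (fun s => F (x s) + α * (s : ℝ)) with hQ
    have hQΔ : ∀ n : ℕ, Δ (n + 1) + α * ((max 1 (n + 1 - q) : ℕ) : ℝ) ≤ Q n := by
      intro n
      obtain ⟨s₀, hs₀mem, hs₀⟩ := Finset.exists_mem_eq_sup'
        (Finset.nonempty_Icc.mpr (by omega : max 1 (n + 1 - q) ≤ n + 1)) (fun t => F (x t))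
      rw [hΔ (n + 1) (by omega), hs₀]
      rw [Finset.mem_Icc] at hs₀mem
      have h1 : F (x s₀) + α * (s₀ : ℝ) ≤ Q n :=
        Finset.le_sup' (fun s => F (x s) + α * (s : ℝ))
          (Finset.mem_Icc.mpr ⟨hs₀mem.1, hs₀mem.2⟩)
      have h2 : ((max 1 (n + 1 - q) : ℕ) : ℝ) ≤ (s₀ : ℝ) := Nat.cast_le.mpr hs₀mem.1
      nlinarith [mul_le_mul_of_nonneg_left h2 hα0]
    have hQstep : ∀ n : ℕ, n + 1 ≤ K → Q (n + 1) ≤ Q n := by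
      intro n hn
      apply Finset.sup'_le
      intro s hs
      rw [Finset.mem_Icc] at hs
      rcases Nat.lt_or_ge s (n + 2) with hlt | hge
      · exact Finset.le_sup' (fun s => F (x s) + α * (s : ℝ))
          (Finset.mem_Icc.mpr ⟨by omega, by omega⟩)
      · have hs' : s = n + 2 := by omega
        subst hs'
        have h1 := hKEY (n + 1) (by omega)
        have h2 : μ ≤ ‖x (n + 1 + 1) - v (n + 1)‖ ^ 2 :=
          hμle (n + 1) (Finset.mem_Icc.mpr ⟨by omega, hn⟩)
        have h3 := hQΔ n
        set low : ℕ := max 1 (n + 1 - q) with hlow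
        have h4 : ((n : ℝ) + 2) ≤ (low : ℝ) + ((q : ℝ) + 1) := by
          have : (n + 2 : ℕ) ≤ low + (q + 1) := by omega
          exact_mod_cast this
        have h5 : α * ((n : ℝ) + 2) ≤ α * (low : ℝ) + c * μ := by
          nlinarith [mul_le_mul_of_nonneg_left h4 hα0]
        have h6 : c * μ ≤ c * ‖x (n + 1 + 1) - v (n + 1)‖ ^ 2 :=
          mul_le_mul_of_nonneg_left h2 hc.le
        have : ((n + 2 : ℕ) : ℝ) = (n : ℝ) + 2 := by push_cast; ring
        rw [this]
        have hxs : F (x (n + 2)) ≤ Δ (n + 1) - c * μ := by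
          have : (n + 1 + 1) = n + 2 := by omega
          rw [this] at h1 h6
          linarith
        linarith
    have hQchain : ∀ n : ℕ, n ≤ K → Q n ≤ Q 0 := by
      intro n
      induction n with
      | zero => intro _; exact le_refl _
      | succ n ih => intro h; exact le_trans (hQstep n h) (ih (by omega))
    have hQ0 : Q 0 = F (x 1) + α := by
      have h1 : max 1 (0 + 1 - q) = 1 := by omega
      simp only [hQ, h1, zero_add, Finset.Icc_self, Finset.sup'_singleton, Nat.cast_one, mul_one]
    have hQK : sInf (Set.range F) + α * ((K : ℝ) + 1) ≤ Q K := by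
      have h1 : F (x (K + 1)) + α * ((K + 1 : ℕ) : ℝ) ≤ Q K :=
        Finset.le_sup' (fun s => F (x s) + α * (s : ℝ))
          (Finset.mem_Icc.mpr ⟨by omega, le_refl (K + 1)⟩)
      have h2 : sInf (Set.range F) ≤ F (x (K + 1)) := csInf_le hbdd ⟨x (K + 1), rfl⟩
      have h3 : ((K + 1 : ℕ) : ℝ) = (K : ℝ) + 1 := by push_cast; ring
      rw [h3] at h1
      linarith
    have hfin : α * (K : ℝ) ≤ c₁ := by
      have := hQchain K (le_refl K)
      rw [hQ0] at this
      linarith [hQK, hFx1c₁]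
    have h7 : α * (K : ℝ) * ((q : ℝ) + 1) ≤ c₁ * ((q : ℝ) + 1) :=
      mul_le_mul_of_nonneg_right hfin hq1.le
    calc c * μ * (K : ℝ) = α * ((q : ℝ) + 1) * (K : ℝ) := by rw [hαq]
      _ = α * (K : ℝ) * ((q : ℝ) + 1) := by ring
      _ ≤ c₁ * ((q : ℝ) + 1) := h7
      _ = ((q : ℝ) + 1) * c₁ := by ring
  constructor
  · -- part (i) : m → 0
    set A : ℕ → ℝ := fun n => Δ (n + 1) with hA
    have hAanti : Antitone A := antitone_nat_of_succ_le (fun n => hΔmono (n + 1) (by omega))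
    have hAbd : BddBelow (Set.range A) := by
      refine ⟨sInf (Set.range F), ?_⟩
      rintro _ ⟨n, rfl⟩
      exact hΔlb (n + 1) (by omega)
    have hAtend : Tendsto A atTop (nhds (⨅ n, A n)) := tendsto_atTop_ciInf hAanti hAbd
    set l : ℝ := ⨅ n, A n with hl
    have hm0 : ∀ j, 0 ≤ m j := by
      intro j
      rw [hm j]
      exact Finset.le_inf' _ _ (fun t _ => sq_nonneg _)
    have hub : ∀ j, q ≤ j → m j ≤ (Δ (j + 1 - q) - Δ (j + 2)) / c := by
      intro j hj
      have hstep : Δ (j + 2) ≤ Δ (j + 1 - q) - c * m j := by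
        rw [hΔ (j + 2) (by omega)]
        apply Finset.sup'_le
        intro s hs
        rw [Finset.mem_Icc] at hs
        have hs2 : 2 ≤ s := by omega
        have h1 := hKEY (s - 1) (by omega)
        have hsr : s - 1 + 1 = s := by omega
        rw [hsr] at h1
        have h2 : Δ (s - 1) ≤ Δ (j + 1 - q) := hΔle (j + 1 - q) (s - 1) (by omega) (by omega)
        have h3 : m j ≤ ‖x (s - 1 + 1) - v (s - 1)‖ ^ 2 := by
          rw [hm j]
          exact Finset.inf'_le (fun t => ‖x (t + 1) - v t‖ ^ 2)
            (Finset.mem_Icc.mpr ⟨by omega, by omega⟩)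
        rw [hsr] at h3
        have h4 : c * m j ≤ c * ‖x s - v (s - 1)‖ ^ 2 := mul_le_mul_of_nonneg_left h3 hc.le
        linarith
      rw [le_div_iff₀ hc]
      nlinarith [hstep]
    have hT1 : Tendsto (fun j => Δ (j + 1 - q)) atTop (nhds l) := by
      have h1 : Tendsto (A ∘ (fun j => j - q)) atTop (nhds l) :=
        hAtend.comp (tendsto_sub_atTop_nat q)
      apply h1.congr'
      filter_upwards [eventually_ge_atTop q] with j hj
      simp only [Function.comp_apply, hA]
      congr 1
      omega
    have hT2 : Tendsto (fun j => Δ (j + 2)) atTop (nhds l) := by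
      have h1 : Tendsto (A ∘ (fun j => j + 1)) atTop (nhds l) :=
        hAtend.comp (tendsto_add_atTop_nat 1)
      apply h1.congr'
      filter_upwards [] with j
      simp only [Function.comp_apply, hA]
    have hT : Tendsto (fun j => (Δ (j + 1 - q) - Δ (j + 2)) / c) atTop (nhds 0) := by
      have := (hT1.sub hT2).div_const c
      simpa using this
    apply tendsto_of_tendsto_of_tendsto_of_le_of_le' tendsto_const_nhds hT
    · exact Filter.Eventually.of_forall hm0
    · filter_upwards [eventually_ge_atTop q] with j hj
      exact hub j hj
  · -- part (ii) : the O(1/K) rate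
    intro K hK
    set μ : ℝ := (Finset.Icc 1 K).inf' (Finset.nonempty_Icc.mpr hK)
      (fun t => ‖x (t + 1) - v t‖ ^ 2) with hμ
    have hμ0 : 0 ≤ μ := Finset.le_inf' _ _ (fun t _ => sq_nonneg _)
    have hμle : ∀ t ∈ Finset.Icc 1 K, μ ≤ ‖x (t + 1) - v t‖ ^ 2 :=
      fun t ht => Finset.inf'_le _ ht
    have hrate := key2 K hK μ hμ0 hμle
    obtain ⟨t₀, ht₀, hμeq⟩ := Finset.exists_mem_eq_inf'
      (Finset.nonempty_Icc.mpr hK) (fun t => ‖x (t + 1) - v t‖ ^ 2)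
    rw [Finset.mem_Icc] at ht₀
    have step1 : (Finset.range K).inf' (Finset.nonempty_range_iff.mpr (by omega)) m
        ≤ m (t₀ - 1) :=
      Finset.inf'_le m (Finset.mem_range.mpr (by omega))
    have step2 : m (t₀ - 1) ≤ μ := by
      rw [hm (t₀ - 1)]
      have ht' : t₀ - 1 + 1 = t₀ := by omega
      rw [hμ, hμeq]
      exact Finset.inf'_le (fun t => ‖x (t + 1) - v t‖ ^ 2)
        (Finset.mem_Icc.mpr ⟨by omega, by omega⟩)
    have hKpos : (0 : ℝ) < (K : ℝ) := by exact_mod_cast hK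
    have hden : (0 : ℝ) < (ρ - L) * (K : ℝ) := by
      apply mul_pos _ hKpos
      linarith
    have step3 : μ ≤ 2 * ((q : ℝ) + 1) * c₁ / ((ρ - L) * (K : ℝ)) := by
      rw [le_div_iff₀ hden]
      have h2c : ρ - L = 2 * c := by simp only [hcdef]; ring
      rw [h2c]
      calc μ * (2 * c * (K : ℝ)) = 2 * (c * μ * (K : ℝ)) := by ring
        _ ≤ 2 * (((q : ℝ) + 1) * c₁) := by linarith [hrate]
        _ = 2 * ((q : ℝ) + 1) * c₁ := by ring
    linarith
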